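/- For any bigon {γ₁, γ₂} in a CAT(0) cube complex with endpoints x, y, and any vertices z ∈ γ₁, z' ∈ γ₂, the vertex z equals the median m(z, m(x,z,z'), m(y,z,z')). -/

import Mathlib

/-- An abstract combinatorial model of a CAT(0) cube complex: a set of vertices `V`
together with a set of hyperplanes (walls) `H`, each hyperplane dividing the vertices
into two halfspaces via `side`.  Two hyperplanes are transverse exactly when they cross
(all four quadrants are inhabited), and only finitely many hyperplanes separate two
given vertices. -/
structure CCC where
  V : Type
  H : Type
  side : H → V → Prop
  transverse : H → H → Prop
  transverse_symm : ∀ h h', transverse h h' → transverse h' h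
  transverse_iff : ∀ h h', transverse h h' ↔ (h ≠ h' ∧ ∃ a b c d : V,
      (side h a ∧ side h' a) ∧ (side h b ∧ ¬ side h' b) ∧
      (¬ side h c ∧ side h' c) ∧ (¬ side h d ∧ ¬ side h' d))
  finsep : ∀ x y : V, {h : H | ¬ (side h x ↔ side h y)}.Finite

namespace CCC

variable (W : CCC)

/-- The hyperplane `h` separates the vertices `x` and `y`. -/
def Sep (h : W.H) (x y : W.V) : Prop := ¬ (W.side h x ↔ W.side h y)

/-- The combinatorial (ℓ¹) distance between vertices: the number of separating
hyperplanes. -/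
noncomputable def dist (x y : W.V) : ℕ := {h : W.H | W.Sep h x y}.ncard

/-- Two hyperplanes are disjoint if they are distinct and not transverse. -/
def Disj (h h' : W.H) : Prop := h ≠ h' ∧ ¬ W.transverse h h'

/-- The ℓ∞ distance between vertices: the maximal number of pairwise disjoint
hyperplanes separating them. -/
noncomputable def dinf (x y : W.V) : ℕ :=
  sSup {n : ℕ | ∃ S : Finset W.H, S.card = n ∧ (∀ h ∈ S, W.Sep h x y) ∧
    (S : Set W.H).Pairwise W.Disj}

/-- A set of vertices is combinatorially convex if it contains every vertex lying on a
combinatorial geodesic between two of its points. -/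
def Convex (C : Set W.V) : Prop :=
  ∀ x ∈ C, ∀ y ∈ C, ∀ z : W.V, W.dist x z + W.dist z y = W.dist x y → z ∈ C

theorem dist_comm (x y : W.V) : W.dist x y = W.dist y x := by
  unfold dist
  congr 1
  ext h
  simp only [Set.mem_setOf_eq, Sep]
  tauto

theorem dist_self (x : W.V) : W.dist x x = 0 := by
  have h : {h : W.H | W.Sep h x x} = ∅ := by ext h; simp [Sep]
  simp [dist, h]

/-- The 1-skeleton of the cube complex: two vertices are adjacent when exactly one
hyperplane separates them. -/
def oneSkeleton : SimpleGraph W.V where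
  Adj x y := W.dist x y = 1
  symm := ⟨fun x y hxy => (W.dist_comm y x).trans hxy⟩
  loopless := ⟨fun x hx => by have := W.dist_self x; omega⟩

/-- `m` is a median vertex of `x`, `y`, `z`. -/
def IsMedian (x y z m : W.V) : Prop :=
  W.dist x y = W.dist x m + W.dist m y ∧
  W.dist x z = W.dist x m + W.dist m z ∧
  W.dist y z = W.dist y m + W.dist m z

/-- The hyperplane `J` separates the hyperplanes `A` and `B`: all of `A` lies in one
halfspace of `J` and all of `B` in the other. -/
def SepHH (J A B : W.H) : Prop :=
  ((∀ x y : W.V, W.Sep A x y → W.side J x) ∧ (∀ x y : W.V, W.Sep B x y → ¬ W.side J x)) ∨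
  ((∀ x y : W.V, W.Sep A x y → ¬ W.side J x) ∧ (∀ x y : W.V, W.Sep B x y → W.side J x))

/-- A `(p,q)`-grid of hyperplanes: two families of hyperplanes, each hyperplane of the
first transverse to each of the second, and inside each family every hyperplane
separates its two neighbours. -/
def IsGrid {p q : ℕ} (v : Fin p → W.H) (hh : Fin q → W.H) : Prop :=
  Function.Injective v ∧ Function.Injective hh ∧
  (∀ (i : Fin p) (j : Fin q), W.transverse (v i) (hh j)) ∧
  (∀ i : Fin p, 0 < i.val → ∀ (hlt : i.val + 1 < p),
    W.SepHH (v i) (v ⟨i.val - 1, lt_of_le_of_lt (Nat.sub_le _ _) i.isLt⟩) (v ⟨i.val + 1, hlt⟩)) ∧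
  (∀ j : Fin q, 0 < j.val → ∀ (hlt : j.val + 1 < q),
    W.SepHH (hh j) (hh ⟨j.val - 1, lt_of_le_of_lt (Nat.sub_le _ _) j.isLt⟩) (hh ⟨j.val + 1, hlt⟩))

/-- A discrete geodesic for the ℓ∞ metric: a chain of vertices from `x` to `y`, each
step of `dinf`-length at most one, whose number of steps is `dinf x y`. -/
def IsInfGeodesic {n : ℕ} (x y : W.V) (f : Fin (n + 1) → W.V) : Prop :=
  f 0 = x ∧ f (Fin.last n) = y ∧ n = W.dinf x y ∧
  ∀ i : Fin n, W.dinf (f i.castSucc) (f i.succ) ≤ 1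

lemma sep_symmdiff (a m b : W.V) :
    {h | W.Sep h a b} = symmDiff {h : W.H | W.Sep h a m} {h : W.H | W.Sep h m b} := by
  ext h
  simp only [Set.mem_setOf_eq, Set.mem_symmDiff, Sep]
  tauto

lemma dist_eq_add_iff (a m b : W.V) :
    W.dist a b = W.dist a m + W.dist m b ↔ ∀ h, ¬(W.Sep h a m ∧ W.Sep h m b) := by
  have hAf : {h : W.H | W.Sep h a m}.Finite := W.finsep a m
  have hBf : {h : W.H | W.Sep h m b}.Finite := W.finsep m b
  have hd : Disjoint (symmDiff {h : W.H | W.Sep h a m} {h : W.H | W.Sep h m b})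
      ({h : W.H | W.Sep h a m} ∩ {h : W.H | W.Sep h m b}) := by
    rw [Set.disjoint_left]
    intro h hh1 hh2
    simp only [Set.mem_symmDiff, Set.mem_inter_iff, Set.mem_setOf_eq] at hh1 hh2
    tauto
  have hu : symmDiff {h : W.H | W.Sep h a m} {h : W.H | W.Sep h m b} ∪
      ({h : W.H | W.Sep h a m} ∩ {h : W.H | W.Sep h m b}) =
      {h : W.H | W.Sep h a m} ∪ {h : W.H | W.Sep h m b} := by
    ext h
    simp only [Set.mem_symmDiff, Set.mem_inter_iff, Set.mem_union, Set.mem_setOf_eq, Sep]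
    tauto
  have e1 : (symmDiff {h : W.H | W.Sep h a m} {h : W.H | W.Sep h m b}).ncard +
      ({h : W.H | W.Sep h a m} ∩ {h : W.H | W.Sep h m b}).ncard =
      ({h : W.H | W.Sep h a m} ∪ {h : W.H | W.Sep h m b}).ncard := by
    rw [← Set.ncard_union_eq hd ((hAf.union hBf).subset symmDiff_le_sup)
      (hAf.inter_of_left _), hu]
  have e2 : ({h : W.H | W.Sep h a m} ∪ {h : W.H | W.Sep h m b}).ncard +
      ({h : W.H | W.Sep h a m} ∩ {h : W.H | W.Sep h m b}).ncard =
      {h : W.H | W.Sep h a m}.ncard + {h : W.H | W.Sep h m b}.ncard :=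
    Set.ncard_union_add_ncard_inter _ _ hAf hBf
  have hdist : {h : W.H | W.Sep h a b}.ncard =
      (symmDiff {h : W.H | W.Sep h a m} {h : W.H | W.Sep h m b}).ncard :=
    congrArg Set.ncard (W.sep_symmdiff a m b)
  constructor
  · intro hEq h hh
    have h0 : ({h : W.H | W.Sep h a m} ∩ {h : W.H | W.Sep h m b}).ncard = 0 := by
      unfold dist at hEq
      omega
    have hE : {h : W.H | W.Sep h a m} ∩ {h : W.H | W.Sep h m b} = ∅ :=
      (Set.ncard_eq_zero (hAf.inter_of_left _)).mp h0
    have hmem : h ∈ {h : W.H | W.Sep h a m} ∩ {h : W.H | W.Sep h m b} := by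
      exact Set.mem_inter (Set.mem_setOf_eq ▸ hh.1) (Set.mem_setOf_eq ▸ hh.2)
    rw [hE] at hmem
    exact hmem
  · intro hh
    have hE : {h : W.H | W.Sep h a m} ∩ {h : W.H | W.Sep h m b} = ∅ := by
      ext h
      simp only [Set.mem_inter_iff, Set.mem_setOf_eq, Set.mem_empty_iff_false, iff_false,
        not_and]
      exact fun hc1 hc2 => hh h ⟨hc1, hc2⟩
    rw [hE] at e1 e2
    simp only [Set.ncard_empty, add_zero] at e1 e2
    unfold dist
    omega

lemma dist_triangle (a b c : W.V) : W.dist a c ≤ W.dist a b + W.dist b c := by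
  have hsub : {h : W.H | W.Sep h a c} ⊆ {h : W.H | W.Sep h a b} ∪ {h : W.H | W.Sep h b c} := by
    intro h hh
    simp only [Set.mem_setOf_eq, Set.mem_union, Sep] at *
    tauto
  calc W.dist a c ≤ ({h : W.H | W.Sep h a b} ∪ {h : W.H | W.Sep h b c}).ncard :=
        Set.ncard_le_ncard hsub ((W.finsep a b).union (W.finsep b c))
    _ ≤ _ := Set.ncard_union_le _ _

lemma dist_le_walk_length {a b : W.V} (w : W.oneSkeleton.Walk a b) :
    W.dist a b ≤ w.length := by
  induction w with
  | nil => simp [dist_self]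
  | @cons u v c hadj w ih =>
    have h1 : W.dist u v = 1 := hadj
    have := W.dist_triangle u v c
    simp only [SimpleGraph.Walk.length_cons]
    omega

lemma geodesic_point {a b : W.V} (w : W.oneSkeleton.Walk a b) (hlen : w.length = W.dist a b)
    {z : W.V} (hz : z ∈ w.support) : W.dist a z + W.dist z b = W.dist a b := by
  letI : DecidableEq W.V := Classical.decEq _
  have h1 := W.dist_le_walk_length (w.takeUntil z hz)
  have h2 := W.dist_le_walk_length (w.dropUntil z hz)
  have h3 : (w.takeUntil z hz).length + (w.dropUntil z hz).length = w.length := by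
    rw [← SimpleGraph.Walk.length_append, SimpleGraph.Walk.take_spec]
  have h4 := W.dist_triangle a z b
  omega

/-- Majority property of medians. -/
lemma median_majority {a b c m : W.V} (hm : W.IsMedian a b c m) (h : W.H) :
    (W.side h m ↔ W.side h a) ∨ ((W.side h m ↔ W.side h b) ∧ (W.side h m ↔ W.side h c)) := by
  obtain ⟨e1, e2, e3⟩ := hm
  have b1 := (W.dist_eq_add_iff a m b).mp e1 h
  have b2 := (W.dist_eq_add_iff a m c).mp e2 h
  have b3 := (W.dist_eq_add_iff b m c).mp e3 h
  simp only [Sep, not_and, not_not] at b1 b2 b3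
  tauto

end CCC

/-- For any bigon `{γ₁, γ₂}` with endpoints `x`, `y` in (the median 1-skeleton of) a
CAT(0) cube complex and any `z ∈ γ₁`, `z' ∈ γ₂`, one has
`z = m(z, m(x,z,z'), m(y,z,z'))`. -/
theorem stmt_11 (W : CCC) (med : W.V → W.V → W.V → W.V)
    (hmed : ∀ a b c m : W.V, W.IsMedian a b c m ↔ m = med a b c)
    (x y : W.V) (γ₁ γ₂ : (W.oneSkeleton).Walk x y)
    (h₁ : γ₁.length = W.dist x y) (h₂ : γ₂.length = W.dist x y)
    (z z' : W.V) (hz : z ∈ γ₁.support) (hz' : z' ∈ γ₂.support) :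
    med z (med x z z') (med y z z') = z := by
  set p := med x z z' with hp
  set q := med y z z' with hq
  have hmp : W.IsMedian x z z' p := (hmed x z z' p).mpr rfl
  have hmq : W.IsMedian y z z' q := (hmed y z z' q).mpr rfl
  have hgz := W.geodesic_point γ₁ h₁ hz
  have hbz : ∀ h, ¬(W.Sep h x z ∧ W.Sep h z y) := (W.dist_eq_add_iff x z y).mp hgz.symm
  have hbtw : ∀ h, ¬(W.Sep h p z ∧ W.Sep h z q) := by
    intro h hcon
    obtain ⟨hpz, hzq⟩ := hcon
    have m1 := W.median_majority hmp h
    have m2 := W.median_majority hmq h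
    exact hbz h (by unfold CCC.Sep at *; tauto)
  have hdpq : W.dist p q = W.dist p z + W.dist z q := (W.dist_eq_add_iff p z q).mpr hbtw
  have hfin : W.IsMedian z p q z := by
    refine ⟨?_, ?_, hdpq⟩
    · rw [W.dist_self]; ring
    · rw [W.dist_self]; ring
  exact ((hmed z p q z).mp hfin).symm
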